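/- If the language L is based on a countably infinite set of atoms, then the n-bisimulation metric topology on a modal space X (where modal equivalence coincides with bisimilarity and X is sufficiently rich) is strictly finer than the Stone topology on X: every Stone-open set is open in the n-bisimulation topology, but the 0-bisimulation ball B_{x,0} around a suitable point x is not Stone-open. -/

import Mathlib

/-- Modal formulas over atoms `Φ` and agents `I`. -/
inductive Form (Φ I : Type) : Type
  | top : Form Φ I
  | atom : Φ → Form Φ I
  | neg : Form Φ I → Form Φ I
  | and : Form Φ I → Form Φ I → Form Φ I
  | box : I → Form Φ I → Form Φ I

/-- A Kripke model: worlds, accessibility per agent, valuation. -/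
structure KripkeModel (Φ I : Type) where
  W : Type
  R : I → W → W → Prop
  V : Φ → W → Prop

/-- Satisfaction of a formula at a world. -/
def KripkeModel.sat {Φ I : Type} (M : KripkeModel Φ I) : M.W → Form Φ I → Prop
  | _, Form.top => True
  | w, Form.atom p => M.V p w
  | w, Form.neg φ => ¬ M.sat w φ
  | w, Form.and φ ψ => M.sat w φ ∧ M.sat w ψ
  | w, Form.box i φ => ∀ v, M.R i w v → M.sat v φ

/-- A pointed Kripke model. -/
structure PointedModel (Φ I : Type) where
  M : KripkeModel Φ I
  s : M.W

def PointedModel.sat {Φ I : Type} (x : PointedModel Φ I) (φ : Form Φ I) : Prop :=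
  x.M.sat x.s φ

/-- Modal equivalence: satisfying the same formulas. -/
def modEquiv {Φ I : Type} (x y : PointedModel Φ I) : Prop :=
  ∀ φ : Form Φ I, x.sat φ ↔ y.sat φ

/-- `n`-bisimilarity of pointed models. -/
def nBisim {Φ I : Type} : ℕ → PointedModel Φ I → PointedModel Φ I → Prop
  | 0, x, y => ∀ p, x.M.V p x.s ↔ y.M.V p y.s
  | n+1, x, y => (∀ p, x.M.V p x.s ↔ y.M.V p y.s) ∧
      (∀ i t, x.M.R i x.s t → ∃ u, y.M.R i y.s u ∧ nBisim n ⟨x.M, t⟩ ⟨y.M, u⟩) ∧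
      (∀ i u, y.M.R i y.s u → ∃ t, x.M.R i x.s t ∧ nBisim n ⟨x.M, t⟩ ⟨y.M, u⟩)

/-- (Full) bisimilarity of pointed models. -/
def Bisimilar {Φ I : Type} (x y : PointedModel Φ I) : Prop :=
  ∃ Z : x.M.W → y.M.W → Prop, Z x.s y.s ∧
    (∀ s t, Z s t → ∀ p, x.M.V p s ↔ y.M.V p t) ∧
    (∀ s t, Z s t → ∀ i s', x.M.R i s s' → ∃ t', y.M.R i t t' ∧ Z s' t') ∧
    (∀ s t, Z s t → ∀ i t', y.M.R i t t' → ∃ s', x.M.R i s s' ∧ Z s' t')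

/-- The modal space over `X`: the quotient of `X` by modal equivalence. -/
def MSpace {Φ I : Type} (X : Set (PointedModel Φ I)) : Type 1 :=
  Quot (fun x y : X => modEquiv x.1 y.1)

/-- Satisfaction on the modal space (well-defined on equivalence classes). -/
def satQ {Φ I : Type} {X : Set (PointedModel Φ I)} (φ : Form Φ I) : MSpace X → Prop :=
  Quot.lift (fun x : X => x.1.sat φ) (fun _ _ h => propext (h φ))

/-- The basic opens of the Stone topology: `U_φ = {x : x ⊨ φ}`. -/
def stoneBasis {Φ I : Type} (X : Set (PointedModel Φ I)) : Set (Set (MSpace X)) :=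
  {S | ∃ φ : Form Φ I, S = {a : MSpace X | satQ φ a}}

/-- The Stone topology on a modal space. -/
def stoneTop {Φ I : Type} (X : Set (PointedModel Φ I)) : TopologicalSpace (MSpace X) :=
  TopologicalSpace.generateFrom (stoneBasis X)

/-- `n`-bisimilarity on the modal space (via representatives). -/
def nBisimQ {Φ I : Type} {X : Set (PointedModel Φ I)} (n : ℕ) (a b : MSpace X) : Prop :=
  ∃ x y : X, Quot.mk _ x = a ∧ Quot.mk _ y = b ∧ nBisim n x.1 y.1

/-- Basic opens of the `n`-bisimulation (metric) topology: balls `B_{x,n}`. -/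
def bisimBasis {Φ I : Type} (X : Set (PointedModel Φ I)) : Set (Set (MSpace X)) :=
  {S | ∃ (a : MSpace X) (n : ℕ), S = {b : MSpace X | nBisimQ n a b}}

/-- The `n`-bisimulation metric topology on a modal space. -/
def bisimTop {Φ I : Type} (X : Set (PointedModel Φ I)) : TopologicalSpace (MSpace X) :=
  TopologicalSpace.generateFrom (bisimBasis X)

def depth {Φ I : Type} : Form Φ I → ℕ
  | .top => 0
  | .atom _ => 0
  | .neg φ => depth φ
  | .and φ ψ => max (depth φ) (depth ψ)
  | .box _ φ => depth φ + 1

lemma nBisim_atoms {Φ I : Type} {n : ℕ} {x y : PointedModel Φ I} (h : nBisim n x y) :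
    ∀ p, x.M.V p x.s ↔ y.M.V p y.s := by
  cases n with
  | zero => exact h
  | succ n => exact h.1

lemma nBisim_refl {Φ I : Type} : ∀ (n : ℕ) (x : PointedModel Φ I), nBisim n x x
  | 0, _ => fun _ => Iff.rfl
  | n+1, x => ⟨fun _ => Iff.rfl,
      fun _ t ht => ⟨t, ht, nBisim_refl n _⟩,
      fun _ u hu => ⟨u, hu, nBisim_refl n _⟩⟩

lemma nBisim_sat {Φ I : Type} (φ : Form Φ I) :
    ∀ (n : ℕ) (x y : PointedModel Φ I), depth φ ≤ n → nBisim n x y →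
      (x.sat φ ↔ y.sat φ) := by
  induction φ with
  | top => intro n x y _ _; exact Iff.rfl
  | atom p => intro n x y _ h; exact nBisim_atoms h p
  | neg φ ih =>
      intro n x y hd h
      exact not_congr (ih n x y (by simpa [depth] using hd) h)
  | and φ ψ ihφ ihψ =>
      intro n x y hd h
      have hd' : depth φ ≤ n ∧ depth ψ ≤ n := by
        simp [depth] at hd; omega
      exact and_congr (ihφ n x y hd'.1 h) (ihψ n x y hd'.2 h)
  | box i φ ih =>
      intro n x y hd h
      obtain ⟨m, rfl⟩ : ∃ m, n = m + 1 := by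
        have : 1 ≤ n := le_trans (by simp [depth]) hd
        exact ⟨n - 1, by omega⟩
      have hd' : depth φ ≤ m := by simp [depth] at hd; omega
      constructor
      · intro hx u hu
        obtain ⟨t, ht, hb⟩ := h.2.2 i u hu
        exact (ih m ⟨x.M, t⟩ ⟨y.M, u⟩ hd' hb).mp (hx t ht)
      · intro hy t ht
        obtain ⟨u, hu, hb⟩ := h.2.1 i t ht
        exact (ih m ⟨x.M, t⟩ ⟨y.M, u⟩ hd' hb).mpr (hy u hu)

def deadModel (S : Set ℕ) : PointedModel ℕ Unit :=
  ⟨⟨Unit, fun _ _ _ => False, fun p _ => p ∈ S⟩, ()⟩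

def maxAtom {I : Type} : Form ℕ I → ℕ
  | .top => 0
  | .atom p => p
  | .neg φ => maxAtom φ
  | .and φ ψ => max (maxAtom φ) (maxAtom ψ)
  | .box _ φ => maxAtom φ

lemma dead_sat (S T : Set ℕ) (φ : Form ℕ Unit)
    (h : ∀ p, p ≤ maxAtom φ → (p ∈ S ↔ p ∈ T)) :
    (deadModel S).sat φ ↔ (deadModel T).sat φ := by
  induction φ with
  | top => exact Iff.rfl
  | atom p => exact h p le_rfl
  | neg φ ih => exact not_congr (ih (by intro p hp; exact h p (by simpa [maxAtom] using hp)))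
  | and φ ψ ihφ ihψ =>
      refine and_congr (ihφ ?_) (ihψ ?_) <;> intro p hp <;>
        exact h p (by simp [maxAtom]; omega)
  | box i φ ih =>
      constructor <;> intro _ v hv <;> exact hv.elim

lemma modEquiv_of_quot_eq {Φ I : Type} {X : Set (PointedModel Φ I)} {x y : X}
    (h : Quot.mk (fun a b : X => modEquiv a.1 b.1) x =
         Quot.mk (fun a b : X => modEquiv a.1 b.1) y) : modEquiv x.1 y.1 := by
  have h' := Quot.eqvGen_exact h
  clear h
  induction h' with
  | rel a b hab => exact hab
  | refl a => intro φ; exact Iff.rfl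
  | symm a b _ ih => intro φ; exact (ih φ).symm
  | trans a b c _ _ ih1 ih2 => intro φ; exact (ih1 φ).trans (ih2 φ)

lemma stone_mem_basic {Φ I : Type} {X : Set (PointedModel Φ I)} {U : Set (MSpace X)}
    (h : TopologicalSpace.GenerateOpen (stoneBasis X) U) :
    ∀ a ∈ U, ∃ φ : Form Φ I, satQ φ a ∧ {b : MSpace X | satQ φ b} ⊆ U := by
  induction h with
  | basic S hS =>
      obtain ⟨φ, rfl⟩ := hS
      exact fun a ha => ⟨φ, ha, subset_rfl⟩
  | univ =>
      intro a _
      refine ⟨Form.top, ?_, fun _ _ => trivial⟩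
      induction a using Quot.inductionOn with
      | h x => exact trivial
  | inter s t _ _ ihs iht =>
      intro a ha
      obtain ⟨φ, hφ, hφs⟩ := ihs a ha.1
      obtain ⟨ψ, hψ, hψs⟩ := iht a ha.2
      refine ⟨Form.and φ ψ, ?_, ?_⟩
      · induction a using Quot.inductionOn with
        | h x => exact ⟨hφ, hψ⟩
      · intro b hb
        have hb1 : satQ φ b ∧ satQ ψ b := by
          induction b using Quot.inductionOn with
          | h y => exact hb
        exact ⟨hφs hb1.1, hψs hb1.2⟩
  | sUnion S _ ih =>
      intro a ha
      obtain ⟨s, hs, has⟩ := ha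
      obtain ⟨φ, hφ, hsub⟩ := ih s hs a has
      exact ⟨φ, hφ, fun b hb => ⟨s, hs, hsub hb⟩⟩

/-- Over countably infinitely many atoms, the `n`-bisimulation topology
on a modal space (where modal equivalence coincides with bisimilarity) is finer than
the Stone topology, and on a sufficiently rich such space it is strictly finer:
some `n`-bisimulation ball is not Stone-open. -/
theorem stmt_10 :
    (∀ X : Set (PointedModel ℕ Unit),
      (∀ x ∈ X, ∀ y ∈ X, modEquiv x y ↔ Bisimilar x y) →
      ∀ U : Set (MSpace X), (stoneTop X).IsOpen U → (bisimTop X).IsOpen U) ∧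
    (∃ X : Set (PointedModel ℕ Unit),
      (∀ x ∈ X, ∀ y ∈ X, modEquiv x y ↔ Bisimilar x y) ∧
      ∃ a : MSpace X, (bisimTop X).IsOpen {b : MSpace X | nBisimQ 0 a b} ∧
        ¬ (stoneTop X).IsOpen {b : MSpace X | nBisimQ 0 a b}) := by
  constructor
  · -- fineness
    intro X hX U hU
    clear hX
    have hU' : TopologicalSpace.GenerateOpen (stoneBasis X) U := hU
    clear hU
    induction hU' with
    | basic S hS =>
        obtain ⟨φ, rfl⟩ := hS
        have key : {a : MSpace X | satQ φ a} =
            ⋃₀ {B : Set (MSpace X) |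
                ∃ a : MSpace X, satQ φ a ∧ B = {b : MSpace X | nBisimQ (depth φ) a b}} := by
          ext b
          constructor
          · intro hb
            refine ⟨{c : MSpace X | nBisimQ (depth φ) b c}, ⟨b, hb, rfl⟩, ?_⟩
            obtain ⟨x, rfl⟩ := Quot.exists_rep b
            exact ⟨x, x, rfl, rfl, nBisim_refl _ _⟩
          · rintro ⟨B, ⟨a, ha, rfl⟩, hb⟩
            obtain ⟨x, y, hxa, rfl, hxy⟩ := hb
            have hx : x.1.sat φ := by rw [← hxa] at ha; exact ha
            exact (nBisim_sat φ _ _ _ le_rfl hxy).mp hx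
        rw [key]
        exact TopologicalSpace.GenerateOpen.sUnion _ (fun B hB => by
          obtain ⟨a, _, rfl⟩ := hB
          exact TopologicalSpace.GenerateOpen.basic _ ⟨a, depth φ, rfl⟩)
    | univ => exact TopologicalSpace.GenerateOpen.univ
    | inter s t _ _ ihs iht => exact TopologicalSpace.GenerateOpen.inter _ _ ihs iht
    | sUnion S _ ih => exact TopologicalSpace.GenerateOpen.sUnion _ ih
  · -- strictness
    refine ⟨{x : PointedModel ℕ Unit | ∃ S : Set ℕ, x = deadModel S}, ?_, ?_⟩
    · rintro x ⟨S, rfl⟩ y ⟨T, rfl⟩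
      constructor
      · intro hme
        refine ⟨fun _ _ => True, trivial, ?_, ?_, ?_⟩
        · intro s t _ p
          exact hme (Form.atom p)
        · intro s t _ i s' hs'
          exact hs'.elim
        · intro s t _ i t' ht'
          exact ht'.elim
      · rintro ⟨Z, hZ, hatom, _, _⟩
        intro φ
        exact dead_sat S T φ (fun p _ => hatom _ _ hZ p)
    · set X : Set (PointedModel ℕ Unit) := {x : PointedModel ℕ Unit | ∃ S : Set ℕ, x = deadModel S}
        with hXdef
      have hmemU : deadModel Set.univ ∈ X := ⟨Set.univ, rfl⟩
      set xU : X := ⟨deadModel Set.univ, hmemU⟩ with hxU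
      set a : MSpace X := Quot.mk _ xU with ha
      refine ⟨a, ?_, ?_⟩
      · exact TopologicalSpace.GenerateOpen.basic _ ⟨a, 0, rfl⟩
      · intro hopen
        have hopen' : TopologicalSpace.GenerateOpen (stoneBasis X)
            {b : MSpace X | nBisimQ 0 a b} := hopen
        have haB : a ∈ {b : MSpace X | nBisimQ 0 a b} :=
          ⟨xU, xU, rfl, rfl, nBisim_refl 0 _⟩
        obtain ⟨φ, hφa, hsub⟩ := stone_mem_basic hopen' a haB
        set N := maxAtom φ with hN
        have hmemS : deadModel {k : ℕ | k ≤ N} ∈ X := ⟨_, rfl⟩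
        set yS : X := ⟨deadModel {k : ℕ | k ≤ N}, hmemS⟩ with hyS
        have hsatU : (deadModel Set.univ).sat φ := hφa
        have hsatS : (deadModel {k : ℕ | k ≤ N}).sat φ :=
          (dead_sat Set.univ {k : ℕ | k ≤ N} φ
            (fun p hp => by simp [Set.mem_setOf_eq, hp, hN])).mp hsatU
        have hyB : Quot.mk _ yS ∈ {b : MSpace X | nBisimQ 0 a b} := hsub hsatS
        obtain ⟨x', y', hx'a, hy'b, h0⟩ := hyB
        have hmex : modEquiv x'.1 (deadModel Set.univ) :=
          modEquiv_of_quot_eq (hx'a.trans ha)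
        have hmey : modEquiv y'.1 (deadModel {k : ℕ | k ≤ N}) :=
          modEquiv_of_quot_eq hy'b
        have hx'atom : x'.1.M.V (N+1) x'.1.s := by
          have := (hmex (Form.atom (N+1))).mpr (Set.mem_univ _)
          exact this
        have hy'atom : y'.1.M.V (N+1) y'.1.s := (h0 (N+1)).mp hx'atom
        have : N + 1 ≤ N := (hmey (Form.atom (N+1))).mp hy'atom
        omega
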